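/- Let n ≥ 1, let K be a real positive semidefinite n×n matrix such that every row of K has at most c nonzero entries (c a positive natural number), and let M̂ be a diagonal real n×n matrix with strictly positive diagonal entries d_1,…,d_n. Then for every nonzero vector x ∈ ℝⁿ, the generalized Rayleigh quotient (xᵀKx)/(xᵀM̂x) is at most c · max_{1≤i≤n} K_{ii}/d_i. Combined with the trivial lower bound, max_i K_{ii}/d_i ≤ λ_n(K,M̂) ≤ c · max_i K_{ii}/d_i. -/

import Mathlib

open Matrix

theorem largest_eig_two_sided_bound (n : ℕ) (hn : 1 ≤ n)
    (K : Matrix (Fin n) (Fin n) ℝ) (hK : K.PosSemidef)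
    (c : ℕ) (hc : 0 < c)
    (hrow : ∀ i, (Finset.univ.filter (fun j => K i j ≠ 0)).card ≤ c)
    (d : Fin n → ℝ) (hd : ∀ i, 0 < d i) :
    (∀ x : Fin n → ℝ, x ≠ 0 →
        (x ⬝ᵥ K.mulVec x) / (x ⬝ᵥ (Matrix.diagonal d).mulVec x)
          ≤ c * Finset.univ.sup' ⟨⟨0, hn⟩, Finset.mem_univ _⟩ (fun i => K i i / d i)) ∧
    Finset.univ.sup' ⟨⟨0, hn⟩, Finset.mem_univ _⟩ (fun i => K i i / d i)
      ≤ sSup {r : ℝ | ∃ x : Fin n → ℝ, x ≠ 0 ∧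
          r = (x ⬝ᵥ K.mulVec x) / (x ⬝ᵥ (Matrix.diagonal d).mulVec x)} ∧
    sSup {r : ℝ | ∃ x : Fin n → ℝ, x ≠ 0 ∧
        r = (x ⬝ᵥ K.mulVec x) / (x ⬝ᵥ (Matrix.diagonal d).mulVec x)}
      ≤ c * Finset.univ.sup' ⟨⟨0, hn⟩, Finset.mem_univ _⟩ (fun i => K i i / d i) := by
  set S : ℝ := Finset.univ.sup' ⟨⟨0, hn⟩, Finset.mem_univ _⟩ (fun i => K i i / d i) with hS
  have hsym : ∀ i j, K j i = K i j := fun i j => hK.1.apply i j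
  have hdiagnn : ∀ i, 0 ≤ K i i := by
    intro i
    have := hK.dotProduct_mulVec_nonneg (Pi.single i 1)
    simpa using this
  have hKS : ∀ i, K i i ≤ S * d i := by
    intro i
    have h1 : K i i / d i ≤ S := Finset.le_sup' (fun i => K i i / d i) (Finset.mem_univ i)
    exact (div_le_iff₀ (hd i)).1 h1
  have hpair : ∀ (x : Fin n → ℝ) (i j : Fin n),
      2 * (x i * (K i j * x j)) ≤ K i i * x i ^ 2 + K j j * x j ^ 2 := by
    intro x i j
    have h := hK.dotProduct_mulVec_nonneg (Pi.single i (x i) - Pi.single j (x j))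
    simp only [star_trivial, sub_dotProduct, dotProduct_sub, mulVec_sub, mulVec_single,
      dotProduct_single, single_dotProduct, Pi.smul_apply, col_apply, op_smul_eq_mul] at h
    rw [hsym i j] at h
    nlinarith [h]
  have hdiagform : ∀ x : Fin n → ℝ,
      x ⬝ᵥ (Matrix.diagonal d).mulVec x = ∑ i, d i * x i ^ 2 := by
    intro x
    simp only [dotProduct, mulVec_diagonal]
    exact Finset.sum_congr rfl fun i _ => by ring
  -- key inequality
  have key : ∀ x : Fin n → ℝ,
      x ⬝ᵥ K.mulVec x ≤ (c : ℝ) * S * (x ⬝ᵥ (Matrix.diagonal d).mulVec x) := by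
    intro x
    have hquad : x ⬝ᵥ K.mulVec x = ∑ i, ∑ j, x i * (K i j * x j) := by
      simp [dotProduct, mulVec, Finset.mul_sum]
    rw [hquad, hdiagform]
    have step1 : ∑ i, ∑ j, x i * (K i j * x j)
        ≤ ∑ i, ∑ j, ((if K i j ≠ 0 then K i i * x i ^ 2 / 2 else 0)
            + (if K i j ≠ 0 then K j j * x j ^ 2 / 2 else 0)) := by
      refine Finset.sum_le_sum fun i _ => Finset.sum_le_sum fun j _ => ?_
      by_cases hij : K i j = 0
      · simp [hij]
      · rw [if_pos hij, if_pos hij]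
        linarith [hpair x i j]
    have cardcount : ∀ (P : Fin n → Prop) [DecidablePred P] (a : ℝ),
        ∑ j, (if P j then a else 0) = ((Finset.univ.filter P).card : ℝ) * a := by
      intro P _ a
      rw [← Finset.sum_filter, Finset.sum_const, nsmul_eq_mul]
    have bound1 : ∑ i, ∑ j, (if K i j ≠ 0 then K i i * x i ^ 2 / 2 else 0)
        ≤ ∑ i, (c : ℝ) * (K i i * x i ^ 2 / 2) := by
      refine Finset.sum_le_sum fun i _ => ?_
      rw [cardcount]
      refine mul_le_mul_of_nonneg_right ?_
        (div_nonneg (mul_nonneg (hdiagnn i) (sq_nonneg _)) two_pos.le)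
      exact_mod_cast hrow i
    have bound2 : ∑ i, ∑ j, (if K i j ≠ 0 then K j j * x j ^ 2 / 2 else 0)
        ≤ ∑ j, (c : ℝ) * (K j j * x j ^ 2 / 2) := by
      rw [Finset.sum_comm]
      refine Finset.sum_le_sum fun j _ => ?_
      have hfe : (Finset.univ.filter (fun i => K i j ≠ 0))
          = (Finset.univ.filter (fun i => K j i ≠ 0)) := by
        refine Finset.filter_congr fun i _ => ?_
        rw [hsym j i]
      rw [cardcount, hfe]
      refine mul_le_mul_of_nonneg_right ?_
        (div_nonneg (mul_nonneg (hdiagnn j) (sq_nonneg _)) two_pos.le)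
      exact_mod_cast hrow j
    have total : ∑ i, ∑ j, x i * (K i j * x j) ≤ (c : ℝ) * ∑ i, K i i * x i ^ 2 := by
      calc ∑ i, ∑ j, x i * (K i j * x j)
          ≤ ∑ i, ∑ j, ((if K i j ≠ 0 then K i i * x i ^ 2 / 2 else 0)
            + (if K i j ≠ 0 then K j j * x j ^ 2 / 2 else 0)) := step1
        _ = (∑ i, ∑ j, (if K i j ≠ 0 then K i i * x i ^ 2 / 2 else 0))
            + ∑ i, ∑ j, (if K i j ≠ 0 then K j j * x j ^ 2 / 2 else 0) := by
            rw [← Finset.sum_add_distrib]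
            exact Finset.sum_congr rfl fun i _ => Finset.sum_add_distrib
        _ ≤ (∑ i, (c : ℝ) * (K i i * x i ^ 2 / 2)) + ∑ j, (c : ℝ) * (K j j * x j ^ 2 / 2) :=
            add_le_add bound1 bound2
        _ = (c : ℝ) * ∑ i, K i i * x i ^ 2 := by
            rw [← Finset.mul_sum, ← mul_add, ← Finset.sum_add_distrib]
            congr 1
            exact Finset.sum_congr rfl fun i _ => by ring
    refine total.trans ?_
    rw [mul_assoc]
    refine mul_le_mul_of_nonneg_left ?_ (by positivity)
    rw [Finset.mul_sum]
    refine Finset.sum_le_sum fun i _ => ?_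
    calc K i i * x i ^ 2 ≤ (S * d i) * x i ^ 2 :=
          mul_le_mul_of_nonneg_right (hKS i) (by positivity)
      _ = S * (d i * x i ^ 2) := by ring
  -- denominator positivity
  have hden : ∀ x : Fin n → ℝ, x ≠ 0 → 0 < x ⬝ᵥ (Matrix.diagonal d).mulVec x := by
    intro x hx
    rw [hdiagform]
    obtain ⟨i, hi⟩ := Function.ne_iff.1 hx
    refine Finset.sum_pos' (fun j _ => mul_nonneg (hd j).le (sq_nonneg _))
      ⟨i, Finset.mem_univ i, ?_⟩
    exact mul_pos (hd i) (lt_of_le_of_ne (sq_nonneg _) (Ne.symm (pow_ne_zero 2 hi)))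
  have part1 : ∀ x : Fin n → ℝ, x ≠ 0 →
      (x ⬝ᵥ K.mulVec x) / (x ⬝ᵥ (Matrix.diagonal d).mulVec x) ≤ (c : ℝ) * S := by
    intro x hx
    rw [div_le_iff₀ (hden x hx)]
    exact key x
  -- S is attained
  obtain ⟨i0, -, hi0⟩ := Finset.exists_mem_eq_sup' (⟨⟨0, hn⟩, Finset.mem_univ _⟩ :
      (Finset.univ : Finset (Fin n)).Nonempty) (fun i => K i i / d i)
  have hx0 : (Pi.single i0 1 : Fin n → ℝ) ≠ 0 := by
    intro h
    have := congrFun h i0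
    simp at this
  have hmem : S ∈ {r : ℝ | ∃ x : Fin n → ℝ, x ≠ 0 ∧
      r = (x ⬝ᵥ K.mulVec x) / (x ⬝ᵥ (Matrix.diagonal d).mulVec x)} := by
    refine ⟨Pi.single i0 1, hx0, ?_⟩
    have h1 : (Pi.single i0 1 : Fin n → ℝ) ⬝ᵥ K.mulVec (Pi.single i0 1) = K i0 i0 := by
      simp [mulVec_single, single_dotProduct]
    have h2 : (Pi.single i0 1 : Fin n → ℝ) ⬝ᵥ (Matrix.diagonal d).mulVec (Pi.single i0 1)
        = d i0 := by
      simp [mulVec_single, single_dotProduct, diagonal_apply_eq]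
    rw [h1, h2, hS, hi0]
  have hbdd : BddAbove {r : ℝ | ∃ x : Fin n → ℝ, x ≠ 0 ∧
      r = (x ⬝ᵥ K.mulVec x) / (x ⬝ᵥ (Matrix.diagonal d).mulVec x)} := by
    refine ⟨(c : ℝ) * S, fun r hr => ?_⟩
    obtain ⟨x, hx, rfl⟩ := hr
    exact part1 x hx
  refine ⟨part1, le_csSup hbdd hmem, csSup_le ⟨S, hmem⟩ fun r hr => ?_⟩
  obtain ⟨x, hx, rfl⟩ := hr
  exact part1 x hx
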